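/- For all integers ℓ ≥ 1 and m ≥ 2 with 2ℓ ≤ m, the 2-partitioning function of the class of decision stumps on ℝ^ℓ satisfies π²(m) = ℓ·(m−1); that is, there exists a sample S ⊆ ℝ^ℓ of m points on which exactly ℓ·(m−1) distinct 2-partitions are realizable by a stump, and this is the maximum possible. -/

import Mathlib

/-- A `c`-partition of a finite set `S`: a set of `c` pairwise disjoint nonempty
subsets (parts) whose union is `S`. -/
def IsPartition {α : Type*} (S : Finset α) (c : ℕ) (P : Finset (Finset α)) : Prop :=
  P.card = c ∧ (∀ p ∈ P, p.Nonempty) ∧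
    (∀ p ∈ P, ∀ q ∈ P, p ≠ q → Disjoint p q) ∧ (∀ x, x ∈ S ↔ ∃ p ∈ P, x ∈ p)

/-- A 2-partition `P = {A, S \ A}` of a sample `S ⊆ ℝ^ℓ` is realizable by a decision
stump if there are a feature `i` and threshold `θ` such that one of the two parts is
`{x ∈ S | x^i > θ}`. -/
def StumpRealizable (ℓ : ℕ) (S : Finset (Fin ℓ → ℝ))
    (P : Finset (Finset (Fin ℓ → ℝ))) : Prop :=
  IsPartition S 2 P ∧ ∃ (i : Fin ℓ) (θ : ℝ), S.filter (fun x => θ < x i) ∈ P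

/-- The 2-partitioning function of the class of decision stumps on `ℝ^ℓ`:
the largest number of distinct 2-partitions realizable by a stump on a sample
of `m` points. -/
noncomputable def stumpPi (ℓ m : ℕ) : ℕ :=
  sSup {n : ℕ | ∃ S : Finset (Fin ℓ → ℝ), S.card = m ∧
    n = {P | StumpRealizable ℓ S P}.ncard}




namespace StumpAux

/-- zigzag rank function -/
def g (m d : ℕ) : ℕ := if 2*d ≤ m then 2*d - 1 else 2*(m-d)

lemma g_lt {m d : ℕ} (hm : 0 < m) (hd : d < m) : g m d < m := by
  unfold g; split_ifs <;> omega

lemma g_inj {m d1 d2 : ℕ} (h1 : d1 < m) (h2 : d2 < m) (h : g m d1 = g m d2) :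
    d1 = d2 := by
  unfold g at h; split_ifs at h <;> omega

lemma g_char {m k d : ℕ} (hk1 : 1 ≤ k) (hk2 : k ≤ m - 1) (hd : d < m) :
    (m - k ≤ g m d ↔ ((m-k)/2 + 1 ≤ d ∧ d ≤ (m-k)/2 + k)) := by
  unfold g; split_ifs <;> omega

variable {m : ℕ} [NeZero m]

lemma val_sub_cast {d a : ℕ} (hd : d < m) (ha : a ≤ m) :
    ((d : ZMod m) - (a : ZMod m)).val = if a ≤ d then d - a else m - a + d := by
  split_ifs with h
  · rw [← Nat.cast_sub h, ZMod.val_cast_of_lt (by omega)]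
  · have h1 : ((d : ZMod m) - (a : ZMod m)) = ((m - (a - d) : ℕ) : ZMod m) := by
      have : a - d ≤ m := by omega
      push_cast [Nat.cast_sub this, Nat.cast_sub (by omega : d ≤ a)]
      simp [ZMod.natCast_self]
    rw [h1, ZMod.val_cast_of_lt (by omega)]
    omega

end StumpAux

namespace Arcs
open Finset
variable {m : ℕ} [NeZero m]

/-- arc of length `k` starting at `s` -/
def Arc (s : ZMod m) (k : ℕ) : Finset (ZMod m) :=
  Finset.univ.filter (fun j => (j - s).val < k)

lemma mem_arc {s j : ZMod m} {k : ℕ} : j ∈ Arc s k ↔ (j - s).val < k := by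
  simp [Arc]

lemma arc_card {s : ZMod m} {k : ℕ} (hk : k ≤ m) : (Arc s k).card = k := by
  rw [show k = (Finset.range k).card from (Finset.card_range k).symm]
  apply Finset.card_bij (fun j _ => (j - s).val)
  · intro a ha; simpa using (mem_arc.mp ha)
  · intro a ha b hb hab
    have := ZMod.val_injective _ hab
    have : a - s = b - s := this
    simpa [sub_left_inj] using this
  · intro d hd
    simp only [Finset.mem_range] at hd
    refine ⟨s + (d : ZMod m), mem_arc.mpr ?_, ?_⟩
    · simp [ZMod.val_cast_of_lt (by omega : d < m), hd]
    · simp [ZMod.val_cast_of_lt (by omega : d < m)]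

lemma arc_eq {s s' : ZMod m} {k : ℕ} (hk1 : 1 ≤ k) (hk2 : k ≤ m - 1)
    (h : Arc s k = Arc s' k) : s = s' := by
  have hm2 : 2 ≤ m := by
    have := NeZero.pos m; omega
  have h0 : s' ∈ Arc s' k := mem_arc.mpr (by simp; omega)
  rw [← h] at h0
  have hd := mem_arc.mp h0
  set d := (s' - s).val with hdd
  rcases Nat.eq_zero_or_pos d with h1 | h1
  · have h2 : s' - s = 0 := by
      rw [hdd] at h1; exact (ZMod.val_eq_zero _).mp h1
    exact (sub_eq_zero.mp h2).symm
  · exfalso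
    -- consider s' - 1
    have hmem : (s' - 1) ∈ Arc s k := by
      rw [mem_arc]
      have : s' - 1 - s = ((d - 1 : ℕ) : ZMod m) := by
        have hds : ((d : ℕ) : ZMod m) = s' - s := by
          rw [hdd, ZMod.natCast_val, ZMod.cast_id]
        rw [Nat.cast_sub h1, hds]; push_cast; ring
      rw [this, ZMod.val_cast_of_lt (by have := ZMod.val_lt (s' - s); omega)]
      omega
    rw [h, mem_arc] at hmem
    have : s' - 1 - s' = ((m - 1 : ℕ) : ZMod m) := by
      rw [Nat.cast_sub (by omega : 1 ≤ m)]
      simp [ZMod.natCast_self]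
    rw [this, ZMod.val_cast_of_lt (by omega)] at hmem
    omega

lemma arc_compl {s : ZMod m} {k : ℕ} (hk : k ≤ m) :
    Finset.univ \ Arc s k = Arc (s + (k : ZMod m)) (m - k) := by
  ext j
  simp only [Finset.mem_sdiff, Finset.mem_univ, true_and, mem_arc, not_lt]
  have h1 : j - (s + (k : ZMod m)) = ((j - s).val : ZMod m) - (k : ZMod m) := by
    rw [ZMod.natCast_val, ZMod.cast_id]; ring
  have hvl := ZMod.val_lt (j - s)
  rw [h1, StumpAux.val_sub_cast (ZMod.val_lt _) hk]
  split_ifs <;> omega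

end Arcs

namespace Stump
open Finset StumpAux Arcs

variable {ℓ m : ℕ} [NeZero m]

/-- the rank value of point `j` on feature `i` -/
def gD (m : ℕ) [NeZero m] (i : ℕ) (j : ZMod m) : ℕ := g m ((j - (i : ZMod m)).val)

/-- sample points -/
noncomputable def pt (ℓ m : ℕ) [NeZero m] : ZMod m → (Fin ℓ → ℝ) := fun j i => (gD m i.val j : ℝ)

/-- top-k set on feature i -/
def TT (m : ℕ) [NeZero m] (i k : ℕ) : Finset (ZMod m) :=
  Finset.univ.filter (fun j => m - k ≤ gD m i j)

lemma TT_eq_arc {i k : ℕ} (hk1 : 1 ≤ k) (hk2 : k ≤ m - 1) :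
    TT m i k = Arc ((i : ZMod m) + (((m-k)/2 + 1 : ℕ) : ZMod m)) k := by
  have hm1 : 1 ≤ m := NeZero.pos m
  ext j
  simp only [TT, mem_filter, mem_univ, true_and, mem_arc]; simp only [gD]
  rw [g_char hk1 hk2 (ZMod.val_lt _)]
  set d := (j - (i : ZMod m)).val with hd
  have hdlt : d < m := ZMod.val_lt _
  set a := (m-k)/2 + 1 with ha
  have h1 : j - ((i : ZMod m) + ((a : ℕ) : ZMod m)) = ((d : ℕ) : ZMod m) - ((a : ℕ) : ZMod m) := by
    rw [hd, ZMod.natCast_val, ZMod.cast_id]; ring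
  rw [h1, val_sub_cast hdlt (by omega : a ≤ m)]
  split_ifs <;> omega

lemma pt_inj (hℓ : 1 ≤ ℓ) : Function.Injective (pt ℓ m) := by
  intro j j' hjj
  have h0 := congrFun hjj ⟨0, hℓ⟩
  simp only [pt, Nat.cast_inj] at h0
  have h0' : gD m 0 j = gD m 0 j' := by exact_mod_cast h0
  simp only [gD, Nat.cast_zero, sub_zero] at h0'
  exact ZMod.val_injective _ (g_inj (ZMod.val_lt _) (ZMod.val_lt _) h0')

/-- the sample -/
noncomputable def Samp (ℓ m : ℕ) [NeZero m] : Finset (Fin ℓ → ℝ) := Finset.univ.image (pt ℓ m)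

lemma Samp_card (hℓ : 1 ≤ ℓ) : (Samp ℓ m).card = m := by
  rw [Samp, Finset.card_image_of_injective _ (pt_inj hℓ), card_univ, ZMod.card]

lemma filter_Samp (i : Fin ℓ) (q : ℝ → Prop) [DecidablePred q] :
    (Samp ℓ m).filter (fun x => q (x i)) =
      (Finset.univ.filter (fun j => q ((gD m i.val j : ℝ)))).image (pt ℓ m) := by
  rw [Samp, Finset.filter_image]
  rfl


lemma pair_eq {α : Type*} [DecidableEq α] {a b c d : α}
    (h : ({a, b} : Finset α) = {c, d}) : (a = c ∧ b = d) ∨ (a = d ∧ b = c) := by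
  have ha : a = c ∨ a = d := by
    have : a ∈ ({c, d} : Finset α) := by rw [← h]; simp
    simpa using this
  have hb : b = c ∨ b = d := by
    have : b ∈ ({c, d} : Finset α) := by rw [← h]; simp
    simpa using this
  have hc : c = a ∨ c = b := by
    have : c ∈ ({a, b} : Finset α) := by rw [h]; simp
    simpa using this
  have hd : d = a ∨ d = b := by
    have : d ∈ ({a, b} : Finset α) := by rw [h]; simp
    simpa using this
  rcases ha with h1|h1 <;> rcases hb with h2|h2 <;> rcases hc with h3|h3 <;>
      rcases hd with h4|h4 <;>
    first
      | (left; constructor <;> grind)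
      | (right; constructor <;> grind)

/-- every realizable 2-partition has the shape {A, S\A} for a nonempty proper filter A -/
lemma shape {ℓ : ℕ} {S : Finset (Fin ℓ → ℝ)} {P : Finset (Finset (Fin ℓ → ℝ))}
    (h : StumpRealizable ℓ S P) :
    ∃ (i : Fin ℓ) (θ : ℝ), (S.filter fun x => θ < x i).Nonempty ∧
      (S.filter fun x => θ < x i) ≠ S ∧
      P = {S.filter fun x => θ < x i, S \ S.filter fun x => θ < x i} := by
  obtain ⟨⟨hc2, hne, hdisj, hcov⟩, i, θ, hA⟩ := h
  set A := S.filter fun x => θ < x i with hAdef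
  obtain ⟨a, b, hab, hP⟩ := Finset.card_eq_two.mp hc2
  have hAmem : A = a ∨ A = b := by
    rw [hP] at hA; simpa using hA
  obtain ⟨B, hBP, hBA⟩ : ∃ B, P = {A, B} ∧ A ≠ B := by
    rcases hAmem with h'|h'
    · exact ⟨b, by rw [hP, h'], by rw [h']; exact hab⟩
    · exact ⟨a, by rw [hP, h', Finset.pair_comm], by rw [h']; exact hab.symm⟩
  have hAP : A ∈ P := by rw [hBP]; simp
  have hBP' : B ∈ P := by rw [hBP]; simp
  have hB : B = S \ A := by
    ext x
    constructor
    · intro hx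
      have hxS : x ∈ S := (hcov x).mpr ⟨B, hBP', hx⟩
      have hdAB := hdisj A hAP B hBP' hBA
      exact Finset.mem_sdiff.mpr ⟨hxS, fun hxA => (Finset.disjoint_left.mp hdAB hxA) hx⟩
    · intro hx
      obtain ⟨p, hp, hxp⟩ := (hcov x).mp (Finset.mem_sdiff.mp hx).1
      rw [hBP] at hp; simp only [Finset.mem_insert, Finset.mem_singleton] at hp
      rcases hp with rfl|rfl
      · exact absurd hxp (Finset.mem_sdiff.mp hx).2
      · exact hxp
  refine ⟨i, θ, hne A hAP, ?_, by rw [hBP, hB]⟩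
  intro hAS
  obtain ⟨x, hx⟩ := hne B hBP'
  rw [hB, hAdef, hAS] at hx
  simp at hx

/-- conversely, {A, S\A} for a nonempty proper filter A is realizable -/
lemma realizable_of_filter {ℓ : ℕ} {S : Finset (Fin ℓ → ℝ)} (i : Fin ℓ) (θ : ℝ)
    (h1 : (S.filter fun x => θ < x i).Nonempty) (h2 : (S.filter fun x => θ < x i) ≠ S) :
    StumpRealizable ℓ S {S.filter fun x => θ < x i, S \ S.filter fun x => θ < x i} := by
  set A := S.filter fun x => θ < x i with hAdef
  have hsub : A ⊆ S := Finset.filter_subset _ _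
  have hBne : (S \ A).Nonempty := by
    rw [Finset.sdiff_nonempty]
    intro hcon
    exact h2 (Finset.Subset.antisymm hsub hcon)
  have hABne : A ≠ S \ A := by
    obtain ⟨x, hx⟩ := h1
    intro hcon
    rw [hcon] at hx
    exact (Finset.mem_sdiff.mp hx).2 (hcon ▸ hx)
  refine ⟨⟨?_, ?_, ?_, ?_⟩, i, θ, by simp [hAdef]⟩
  · rw [Finset.card_pair hABne]
  · intro p hp
    simp only [Finset.mem_insert, Finset.mem_singleton] at hp
    rcases hp with rfl|rfl
    · exact h1
    · exact hBne
  · intro p hp q hq hpq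
    simp only [Finset.mem_insert, Finset.mem_singleton] at hp hq
    rcases hp with rfl|rfl <;> rcases hq with rfl|rfl
    · exact absurd rfl hpq
    · exact Finset.disjoint_sdiff
    · exact Finset.sdiff_disjoint
    · exact absurd rfl hpq
  · intro x
    constructor
    · intro hx
      by_cases hxA : x ∈ A
      · exact ⟨A, by simp, hxA⟩
      · exact ⟨S \ A, by simp, Finset.mem_sdiff.mpr ⟨hx, hxA⟩⟩
    · rintro ⟨p, hp, hxp⟩
      simp only [Finset.mem_insert, Finset.mem_singleton] at hp
      rcases hp with rfl|rfl
      · exact hsub hxp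
      · exact (Finset.mem_sdiff.mp hxp).1

lemma upper {ℓ m : ℕ} (hm : 2 ≤ m) (S : Finset (Fin ℓ → ℝ)) (hS : S.card = m) :
    {P | StumpRealizable ℓ S P}.ncard ≤ ℓ * (m - 1) := by
  classical
  set Φ : Fin ℓ → Finset (Finset (Fin ℓ → ℝ)) := fun i =>
    S.powerset.filter
      (fun A => A.Nonempty ∧ A ≠ S ∧ ∃ θ : ℝ, A = S.filter fun x => θ < x i) with hΦ
  have hΦcard : ∀ i, (Φ i).card ≤ m - 1 := by
    intro i
    have hle : (Φ i).card ≤ (Finset.Icc 1 (m-1)).card := by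
      apply Finset.card_le_card_of_injOn (fun A => A.card)
      · intro A hA
        simp only [hΦ, Finset.mem_coe, Finset.mem_filter, Finset.mem_powerset] at hA
        obtain ⟨hsub, hne, hns, _⟩ := hA
        rw [Finset.mem_coe, Finset.mem_Icc]
        refine ⟨Finset.card_pos.mpr hne, ?_⟩
        have hss : A ⊂ S := hsub.ssubset_of_ne hns
        have := Finset.card_lt_card hss
        beta_reduce
        omega
      · intro A hA B hB hcard
        simp only [hΦ, Finset.coe_filter, Set.mem_setOf_eq, Finset.mem_powerset] at hA hB
        obtain ⟨_, _, _, θa, ha⟩ := hA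
        obtain ⟨_, _, _, θb, hb⟩ := hB
        have key : ∀ θ1 θ2 : ℝ, θ1 ≤ θ2 →
            (S.filter fun x => θ2 < x i) ⊆ (S.filter fun x => θ1 < x i) := by
          intro θ1 θ2 h12 x hx
          simp only [Finset.mem_filter] at *
          exact ⟨hx.1, lt_of_le_of_lt h12 hx.2⟩
        have hcard' : A.card = B.card := hcard
        rcases le_total θa θb with hle|hle
        · have hsub : B ⊆ A := by rw [ha, hb]; exact key _ _ hle
          exact (Finset.eq_of_subset_of_card_le hsub hcard'.le).symm
        · have hsub : A ⊆ B := by rw [ha, hb]; exact key _ _ hle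
          exact Finset.eq_of_subset_of_card_le hsub hcard'.ge
    simpa [Nat.card_Icc] using hle
  set F : Finset (Finset (Finset (Fin ℓ → ℝ))) :=
    Finset.univ.biUnion
      (fun i : Fin ℓ => (Φ i).image
        (fun A => ({A, S \ A} : Finset (Finset (Fin ℓ → ℝ))))) with hF
  have hRF : {P | StumpRealizable ℓ S P} ⊆ ↑F := by
    intro P hP
    obtain ⟨i, θ, hne, hns, hPeq⟩ := Stump.shape hP
    refine Finset.mem_coe.mpr (Finset.mem_biUnion.mpr
      ⟨i, Finset.mem_univ _, Finset.mem_image.mpr ⟨_, ?_, hPeq.symm⟩⟩)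
    simp only [hΦ, Finset.mem_filter, Finset.mem_powerset]
    exact ⟨Finset.filter_subset _ _, hne, hns, θ, rfl⟩
  calc {P | StumpRealizable ℓ S P}.ncard ≤ (↑F : Set _).ncard :=
        Set.ncard_le_ncard hRF (F.finite_toSet)
    _ = F.card := Set.ncard_coe_finset F
    _ ≤ ∑ i : Fin ℓ, ((Φ i).image (fun A => ({A, S \ A} : Finset (Finset (Fin ℓ → ℝ))))).card :=
        Finset.card_biUnion_le
    _ ≤ ∑ _i : Fin ℓ, (m - 1) := by
        apply Finset.sum_le_sum
        intro i _
        exact le_trans (Finset.card_image_le) (hΦcard i)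
    _ = ℓ * (m - 1) := by simp [Finset.sum_const, Finset.card_univ]

section Construction
open Finset StumpAux Arcs

lemma half_lt {n v : ℕ} : ((n:ℝ) - 1/2 < (v:ℝ)) ↔ n ≤ v := by
  constructor
  · intro h
    by_contra hc
    push_neg at hc
    have h2 : (v:ℝ) + 1 ≤ n := by exact_mod_cast hc
    linarith
  · intro h
    have h2 : (n:ℝ) ≤ v := by exact_mod_cast h
    linarith

/-- the canonical partition -/
noncomputable def Q (ℓ m : ℕ) [NeZero m] (i : Fin ℓ) (k : ℕ) :
    Finset (Finset (Fin ℓ → ℝ)) :=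
  {(TT m i.val k).image (pt ℓ m),
    ((Finset.univ : Finset (ZMod m)) \ TT m i.val k).image (pt ℓ m)}

lemma TT_card [NeZero m] (i : Fin ℓ) {k : ℕ} (hk1 : 1 ≤ k) (hk2 : k ≤ m - 1) :
    (TT m i.val k).card = k := by
  rw [TT_eq_arc hk1 hk2, arc_card (by have := NeZero.pos m; omega)]

lemma image_TT_filter [NeZero m] (i : Fin ℓ) {k : ℕ} (hk1 : 1 ≤ k) (hk2 : k ≤ m - 1) :
    (Samp ℓ m).filter (fun x => ((m - k : ℕ):ℝ) - 1/2 < x i)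
      = (TT m i.val k).image (pt ℓ m) := by
  rw [filter_Samp i (fun r => ((m-k:ℕ):ℝ) - 1/2 < r)]
  congr 1
  ext j
  simp only [mem_filter, mem_univ, true_and, TT]
  rw [half_lt]

lemma sdiff_image [NeZero m] (hℓ : 1 ≤ ℓ) (T : Finset (ZMod m)) :
    Samp ℓ m \ T.image (pt ℓ m) = (Finset.univ \ T).image (pt ℓ m) := by
  rw [Samp, ← Finset.image_sdiff _ _ (pt_inj hℓ)]

lemma Q_realizable [NeZero m] (hℓ : 1 ≤ ℓ) (i : Fin ℓ) {k : ℕ}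
    (hk1 : 1 ≤ k) (hk2 : k ≤ m - 1) :
    StumpRealizable ℓ (Samp ℓ m) (Q ℓ m i k) := by
  have hm2 : 2 ≤ m := by have := NeZero.pos m; omega
  have hfilt := image_TT_filter (ℓ := ℓ) i hk1 hk2
  have hTcard : ((TT m i.val k).image (pt ℓ m)).card = k := by
    rw [Finset.card_image_of_injective _ (pt_inj hℓ), TT_card i hk1 hk2]
  have h1 : ((Samp ℓ m).filter (fun x => ((m - k : ℕ):ℝ) - 1/2 < x i)).Nonempty := by
    rw [hfilt, ← Finset.card_pos, hTcard]; omega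
  have h2 : ((Samp ℓ m).filter (fun x => ((m - k : ℕ):ℝ) - 1/2 < x i)) ≠ Samp ℓ m := by
    intro hcon
    have := congrArg Finset.card hcon
    rw [hfilt, hTcard, Samp_card hℓ] at this
    omega
  have key := realizable_of_filter i (((m - k : ℕ):ℝ) - 1/2) h1 h2
  rw [hfilt, sdiff_image hℓ] at key
  exact key

lemma realizable_eq_Q [NeZero m] (hℓ : 1 ≤ ℓ) {P : Finset (Finset (Fin ℓ → ℝ))}
    (h : StumpRealizable ℓ (Samp ℓ m) P) :
    ∃ (i : Fin ℓ) (k : ℕ), 1 ≤ k ∧ k ≤ m - 1 ∧ P = Q ℓ m i k := by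
  classical
  obtain ⟨i, θ, hne, hns, hPeq⟩ := shape h
  obtain ⟨U, hU⟩ : ∃ U : Finset (ZMod m),
      U = Finset.univ.filter (fun j => θ < ((gD m i.val j : ℕ):ℝ)) :=
    ⟨_, rfl⟩
  have hAU : (Samp ℓ m).filter (fun x => θ < x i) = U.image (pt ℓ m) := by
    rw [hU]; exact filter_Samp i (fun r => θ < r)
  obtain ⟨W, hW⟩ : ∃ W : Finset ℕ, W = (Finset.range m).filter (fun v : ℕ => θ < (v:ℝ)) :=
    ⟨_, rfl⟩
  obtain ⟨c, hc⟩ : ∃ c : ℕ, c = W.card := ⟨_, rfl⟩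
  have hgD_lt : ∀ j : ZMod m, gD m i.val j < m :=
    fun j => g_lt (NeZero.pos m) (ZMod.val_lt _)
  have hgD_inj : Function.Injective (fun j : ZMod m => gD m i.val j) := by
    intro a b hab
    have h1 := g_inj (ZMod.val_lt _) (ZMod.val_lt _) hab
    have h2 := ZMod.val_injective _ h1
    have h3 : a - (i.val : ZMod m) = b - (i.val : ZMod m) := h2
    have := sub_left_injective.eq_iff.mp h3
    exact this
  have hgD_surj : ∀ v, v < m → ∃ j : ZMod m, gD m i.val j = v := by
    intro v hv
    have hbij : Function.Bijective
        (fun j : ZMod m => (⟨gD m i.val j, hgD_lt j⟩ : Fin m)) := by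
      rw [Fintype.bijective_iff_injective_and_card]
      constructor
      · intro a b hab
        exact hgD_inj (congrArg Fin.val hab)
      · simp [ZMod.card]
    obtain ⟨j, hj⟩ := hbij.2 ⟨v, hv⟩
    exact ⟨j, congrArg Fin.val hj⟩
  have hUcard : U.card = c := by
    rw [hc]
    apply Finset.card_bij (fun j _ => gD m i.val j)
    · intro a ha
      rw [hU, mem_filter] at ha
      replace ha := ha.2
      simp only [hW, mem_filter, mem_range]
      exact ⟨hgD_lt a, ha⟩
    · intro a _ b _ hab
      exact hgD_inj hab
    · intro v hv
      simp only [hW, mem_filter, mem_range] at hv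
      obtain ⟨j, hj⟩ := hgD_surj v hv.1
      refine ⟨j, ?_, hj⟩
      simp only [hU, mem_filter, mem_univ, true_and]
      rw [hj]
      exact hv.2
  have hAcard : ((Samp ℓ m).filter (fun x => θ < x i)).card = c := by
    rw [hAU, Finset.card_image_of_injective _ (pt_inj hℓ), hUcard]
  have h1c : 1 ≤ c := by
    rw [← hAcard]
    exact Finset.card_pos.mpr hne
  have hcm : c ≤ m := by
    rw [hc, hW]
    exact le_trans (Finset.card_filter_le _ _) (le_of_eq (Finset.card_range m))
  have hcm1 : c ≤ m - 1 := by
    rcases Nat.lt_or_ge c m with h'|h'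
    · exact Nat.le_sub_one_of_lt h'
    · exfalso
      have hceq : c = m := le_antisymm hcm h'
      have hWeq : W = Finset.range m := by
        rw [hW]
        apply Finset.eq_of_subset_of_card_le (Finset.filter_subset _ _)
        rw [Finset.card_range, ← hW, ← hc, hceq]
      have hUuniv : U = Finset.univ := by
        apply Finset.eq_univ_of_forall
        intro j
        simp only [hU, mem_filter, mem_univ, true_and]
        have hmem : gD m i.val j ∈ W := by rw [hWeq, mem_range]; exact hgD_lt j
        rw [hW, mem_filter] at hmem
        exact hmem.2
      apply hns
      rw [hAU, hUuniv, ← Samp]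
  have hWne : W.Nonempty := Finset.card_pos.mp (by rw [← hc]; exact h1c)
  have hWico : W = Finset.Ico (m - c) m := by
    obtain ⟨v0, hv0⟩ : ∃ v0, v0 = W.min' hWne := ⟨_, rfl⟩
    have hv0W : v0 ∈ W := hv0 ▸ W.min'_mem hWne
    have hv0m : v0 < m := by
      have h' := hv0W
      rw [hW, Finset.mem_filter, Finset.mem_range] at h'
      exact h'.1
    have key : W = Finset.Ico v0 m := by
      ext v
      simp only [hW, Finset.mem_Ico, mem_filter, mem_range]
      constructor
      · intro hv
        exact ⟨hv0 ▸ W.min'_le v (by rw [hW, mem_filter, mem_range]; exact ⟨hv.1, hv.2⟩), hv.1⟩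
      · rintro ⟨hl, hr⟩
        refine ⟨hr, ?_⟩
        have hθ : θ < (v0:ℝ) := by
          have h' := hv0W
          rw [hW, Finset.mem_filter] at h'
          exact h'.2
        have : (v0:ℝ) ≤ v := by exact_mod_cast hl
        linarith
    have hcv : c = m - v0 := by rw [hc, key, Nat.card_Ico]
    rw [key]
    congr 1
    rw [hcv, Nat.sub_sub_self hv0m.le]
  have hUT : U = TT m i.val c := by
    ext j
    simp only [hU, TT, mem_filter, mem_univ, true_and]
    have hj := hgD_lt j
    have hmem : gD m i.val j ∈ W ↔ θ < ((gD m i.val j : ℕ):ℝ) := by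
      rw [hW, mem_filter, mem_range]
      exact ⟨fun h => h.2, fun h => ⟨hj, h⟩⟩
    rw [← hmem, hWico, Finset.mem_Ico]
    constructor
    · intro h'; exact h'.1
    · intro h'; exact ⟨h', hj⟩
  refine ⟨i, c, h1c, hcm1, ?_⟩
  rw [hPeq, hAU, hUT, sdiff_image hℓ]
  rfl

lemma Q_injOn [NeZero m] (hℓ : 1 ≤ ℓ) (h2ℓ : 2*ℓ ≤ m) {i i' : Fin ℓ} {k k' : ℕ}
    (hk1 : 1 ≤ k) (hk2 : k ≤ m - 1) (hk1' : 1 ≤ k') (hk2' : k' ≤ m - 1)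
    (heq : Q ℓ m i k = Q ℓ m i' k') : i = i' ∧ k = k' := by
  classical
  have hm1 : 1 ≤ m := NeZero.pos m
  have himg := Finset.image_injective (pt_inj (ℓ := ℓ) (m := m) hℓ)
  have hiℓ := i.isLt
  have hiℓ' := i'.isLt
  unfold Q at heq
  rcases pair_eq heq with ⟨h1, _⟩ | ⟨h1, _⟩
  · have hTT : TT m i.val k = TT m i'.val k' := himg h1
    rw [TT_eq_arc hk1 hk2, TT_eq_arc hk1' hk2'] at hTT
    have hkk : k = k' := by
      have hcc := congrArg Finset.card hTT
      rwa [arc_card (by omega), arc_card (by omega)] at hcc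
    subst hkk
    have hs := arc_eq hk1 hk2 hTT
    have h2 : (i.val : ZMod m) = (i'.val : ZMod m) := add_right_cancel hs
    have h3 := congrArg ZMod.val h2
    rw [ZMod.val_cast_of_lt (by omega), ZMod.val_cast_of_lt (by omega)] at h3
    exact ⟨Fin.ext h3, rfl⟩
  · exfalso
    have hTT : TT m i.val k = Finset.univ \ TT m i'.val k' := himg h1
    rw [TT_eq_arc hk1 hk2, TT_eq_arc hk1' hk2', arc_compl (by omega)] at hTT
    have hkk : k = m - k' := by
      have hcc := congrArg Finset.card hTT
      rwa [arc_card (by omega), arc_card (by omega)] at hcc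
    rw [← hkk] at hTT
    have hs := arc_eq hk1 hk2 hTT
    set u := (m-k)/2 with hu
    set w := k/2 with hw
    have hcast : ((i.val + (u + 1) : ℕ) : ZMod m)
        = ((i'.val + (w + 1) + k' : ℕ) : ZMod m) := by
      push_cast
      push_cast at hs
      linear_combination hs
    have hmod := (ZMod.natCast_eq_natCast_iff _ _ _).mp hcast
    have hdvd : (m:ℤ) ∣ ((i'.val + (w + 1) + k' : ℕ) : ℤ) - ((i.val + (u + 1) : ℕ) : ℤ) :=
      hmod.dvd
    obtain ⟨t, ht⟩ := hdvd
    have hb1 : ((i'.val + (w + 1) + k' : ℕ) : ℤ) - ((i.val + (u + 1) : ℕ) : ℤ) < m := by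
      push_cast
      omega
    have hb2 : -(m:ℤ) < ((i'.val + (w + 1) + k' : ℕ) : ℤ) - ((i.val + (u + 1) : ℕ) : ℤ) := by
      push_cast
      omega
    have hmz : (0:ℤ) < m := by exact_mod_cast hm1
    have ht0 : t = 0 := by
      by_contra htne
      rcases lt_or_gt_of_ne htne with h'|h'
      · have : (m:ℤ) * t ≤ m * (-1) := by
          apply mul_le_mul_of_nonneg_left (by omega) hmz.le
        rw [ht] at hb2
        linarith
      · have : (m:ℤ) * 1 ≤ m * t := by
          apply mul_le_mul_of_nonneg_left (by omega) hmz.le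
        rw [ht] at hb1
        linarith
    rw [ht0, mul_zero] at ht
    have hzz : ((i'.val + (w + 1) + k' : ℕ) : ℤ) = ((i.val + (u + 1) : ℕ) : ℤ) :=
      sub_eq_zero.mp ht
    have hteq : i'.val + (w + 1) + k' = i.val + (u + 1) := by exact_mod_cast hzz
    omega

lemma construction_count [NeZero m] (hℓ : 1 ≤ ℓ) (hm : 2 ≤ m) (h2ℓ : 2*ℓ ≤ m) :
    {P | StumpRealizable ℓ (Samp ℓ m) P}.ncard = ℓ * (m - 1) := by
  classical
  have hset : {P | StumpRealizable ℓ (Samp ℓ m) P} =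
      ↑(((Finset.univ : Finset (Fin ℓ)) ×ˢ Finset.Icc 1 (m-1)).image
        (fun z => Q ℓ m z.1 z.2)) := by
    ext P
    simp only [Set.mem_setOf_eq, Finset.coe_image, Set.mem_image, Finset.mem_coe]
    constructor
    · intro hre
      obtain ⟨i, k, h1, h2, rfl⟩ := realizable_eq_Q hℓ hre
      exact ⟨(i,k), by simp [Finset.mem_product, Finset.mem_Icc, h1, h2], rfl⟩
    · rintro ⟨⟨i,k⟩, hz, rfl⟩
      simp only [Finset.mem_coe, Finset.mem_product, Finset.mem_Icc] at hz
      exact Q_realizable hℓ i hz.2.1 hz.2.2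
  rw [hset, Set.ncard_coe_finset]
  rw [Finset.card_image_of_injOn]
  · rw [Finset.card_product, Finset.card_univ, Fintype.card_fin, Nat.card_Icc]
    congr 1
  · rintro ⟨i,k⟩ hz ⟨i',k'⟩ hz' heq
    simp only [Finset.mem_coe, Finset.mem_product, Finset.mem_Icc] at hz hz'
    obtain ⟨h1, h2⟩ := Q_injOn hℓ h2ℓ hz.2.1 hz.2.2 hz'.2.1 hz'.2.2 heq
    simp only [Prod.mk.injEq]
    exact ⟨h1, h2⟩


end Construction

end Stump

theorem stump_two_partitioning_eq_of_two_ell_le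
    (ℓ m : ℕ) (hℓ : 1 ≤ ℓ) (hm : 2 ≤ m) (h : 2 * ℓ ≤ m) :
    stumpPi ℓ m = ℓ * (m - 1) ∧
      (∃ S : Finset (Fin ℓ → ℝ), S.card = m ∧
        {P | StumpRealizable ℓ S P}.ncard = ℓ * (m - 1)) ∧
      (∀ S : Finset (Fin ℓ → ℝ), S.card = m →
        {P | StumpRealizable ℓ S P}.ncard ≤ ℓ * (m - 1)) := by
  haveI : NeZero m := ⟨by omega⟩
  have hupper : ∀ S : Finset (Fin ℓ → ℝ), S.card = m →
      {P | StumpRealizable ℓ S P}.ncard ≤ ℓ * (m - 1) :=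
    fun S hS => Stump.upper hm S hS
  have hcon : (Stump.Samp ℓ m).card = m := Stump.Samp_card hℓ
  have hcount := Stump.construction_count hℓ hm h
  refine ⟨?_, ⟨Stump.Samp ℓ m, hcon, hcount⟩, hupper⟩
  unfold stumpPi
  apply le_antisymm
  · refine csSup_le ⟨ℓ*(m-1), ⟨Stump.Samp ℓ m, hcon, hcount.symm⟩⟩ ?_
    rintro n ⟨S, hS, rfl⟩
    exact hupper S hS
  · apply le_csSup
    · exact ⟨ℓ*(m-1), by rintro n ⟨S, hS, rfl⟩; exact hupper S hS⟩
    · exact ⟨Stump.Samp ℓ m, hcon, hcount.symm⟩
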